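/- Let K be a field and A a commutative Hopf algebra over K. Then every finite subset of A is contained in a Hopf subalgebra of A that is finitely generated as a K-algebra. Consequently, A is the directed union of its finitely generated Hopf subalgebras. -/

import Mathlib

open scoped TensorProduct

namespace StmtAux
open Coalgebra HopfAlgebra TensorProduct LinearMap

variable {K A : Type*} [CommRing K] [CommRing A] [HopfAlgebra K A]

local notation "S" => HopfAlgebra.antipode (R := K)
local notation "ε" => Coalgebra.counit (R := K)
local notation "Δ" => Coalgebra.comul (R := K)

lemma sum_counit_smul_right {ι : Type*} {a : A} (r : Repr K a ι) :
    ∑ i ∈ r.index, ε (r.left i) • r.right i = a := by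
  have h := congrArg (TensorProduct.lid K A) (sum_counit_tmul_eq r)
  simp only [map_sum, _root_.TensorProduct.lid_tmul, one_smul] at h
  exact h

lemma sum_counit_smul_left {ι : Type*} {a : A} (r : Repr K a ι) :
    ∑ i ∈ r.index, ε (r.right i) • r.left i = a := by
  have h := congrArg (TensorProduct.rid K A) (sum_tmul_counit_eq r)
  simp only [map_sum, _root_.TensorProduct.rid_tmul, one_smul] at h
  exact h

lemma sweedler_apply {M : Type*} [AddCommMonoid M] [Module K M]
    (F : A ⊗[K] (A ⊗[K] A) →ₗ[K] M) {ι : Type*} {κ Λ : ι → Type*} {a : A} (r : Repr K a ι)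
    (X : ∀ i, Repr K (r.left i) (κ i)) (Y : ∀ i, Repr K (r.right i) (Λ i)) :
    ∑ i ∈ r.index, ∑ j ∈ (X i).index,
        F ((X i).left j ⊗ₜ[K] ((X i).right j ⊗ₜ[K] r.right i)) =
      ∑ i ∈ r.index, ∑ j ∈ (Y i).index,
        F (r.left i ⊗ₜ[K] ((Y i).left j ⊗ₜ[K] (Y i).right j)) := by
  have h := congrArg F (sum_tmul_tmul_eq r X Y)
  simp only [map_sum] at h
  exact h

lemma antipode_one : S (1 : A) = 1 := by
  have h := sum_antipode_mul_eq_algebraMap_counit (R := K) (a := (1 : A))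
    ⟨({0} : Finset ℕ), fun _ => (1 : A), fun _ => (1 : A), by
      simp [Bialgebra.comul_one, Algebra.TensorProduct.one_def]⟩
  simpa using h

end StmtAux

namespace StmtAux
open Coalgebra HopfAlgebra TensorProduct LinearMap
variable {K A : Type*} [CommRing K] [CommRing A] [HopfAlgebra K A]

local notation "S" => HopfAlgebra.antipode (R := K)
local notation "ε" => Coalgebra.counit (R := K)
local notation "Δ" => Coalgebra.comul (R := K)

lemma sum_tmul_mul_antipode {ι : Type*} {κ : ι → Type*} {t : A} (r : Repr K t ι)
    (X : ∀ i, Repr K (r.left i) (κ i)) :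
    ∑ i ∈ r.index, ∑ j ∈ (X i).index,
      (X i).left j ⊗ₜ[K] ((X i).right j * S (r.right i)) = t ⊗ₜ[K] 1 := by
  have h := sweedler_apply (K := K)
      (F := LinearMap.lTensor A ((LinearMap.mul' K A) ∘ₗ
        (LinearMap.lTensor A (HopfAlgebra.antipode (R := K)))))
      r X (fun i => ℛ K (r.right i))
  simp only [LinearMap.lTensor_tmul, LinearMap.comp_apply, LinearMap.mul'_apply] at h
  rw [h]
  calc ∑ i ∈ r.index, ∑ j ∈ (ℛ K (r.right i)).index,
        r.left i ⊗ₜ[K] ((ℛ K (r.right i)).left j * S ((ℛ K (r.right i)).right j))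
      = ∑ i ∈ r.index, (ε (r.right i) • r.left i) ⊗ₜ[K] (1 : A) := by
        refine Finset.sum_congr rfl fun i _ => ?_
        rw [← tmul_sum, sum_mul_antipode_eq_smul (ℛ K (r.right i)), tmul_smul, smul_tmul']
    _ = t ⊗ₜ[K] 1 := by rw [← sum_tmul, sum_counit_smul_left r]

lemma antipode_mul (a b : A) : S (a * b) = S a * S b := by
  classical
  set ra := ℛ K a with hra
  set rb := ℛ K b with hrb
  set Xa : ∀ i, Repr K (ra.left i) (A × A) := fun i => ℛ K (ra.left i) with hXa
  set Xb : ∀ k, Repr K (rb.left k) (A × A) := fun k => ℛ K (rb.left k) with hXb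
  set E := ∑ i ∈ ra.index, ∑ j ∈ (Xa i).index, ∑ k ∈ rb.index, ∑ l ∈ (Xb k).index,
    S ((Xa i).left j * (Xb k).left l) *
      ((Xa i).right j * (((Xb k).right l * S (rb.right k)) * S (ra.right i))) with hE
  have wayB : E = S (a * b) := by
    let Phi : ∀ i, (Xa i).ι → (A ⊗[K] A →ₗ[K] A) := fun i j =>
      TensorProduct.lift (LinearMap.mk₂ K
        (fun β₁ β₂ => S ((Xa i).left j * β₁) * ((Xa i).right j * (β₂ * S (ra.right i))))
        (fun m₁ m₂ n => by simp [mul_add, add_mul, map_add])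
        (fun c m n => by simp [smul_mul_assoc, mul_smul_comm, map_smul])
        (fun m n₁ n₂ => by simp [mul_add, add_mul])
        (fun c m n => by simp [smul_mul_assoc, mul_smul_comm]))
    let Psi : A ⊗[K] A →ₗ[K] A :=
      TensorProduct.lift (LinearMap.mk₂ K
        (fun α₁ α₂ => S (α₁ * b) * α₂)
        (fun m₁ m₂ n => by simp [mul_add, add_mul, map_add])
        (fun c m n => by simp [smul_mul_assoc, mul_smul_comm, map_smul])
        (fun m n₁ n₂ => by simp [mul_add])
        (fun c m n => by simp [mul_smul_comm]))
    have hPhi : ∀ i j β₁ β₂, Phi i j (β₁ ⊗ₜ[K] β₂) =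
        S ((Xa i).left j * β₁) * ((Xa i).right j * (β₂ * S (ra.right i))) := by
      intro i j β₁ β₂; simp [Phi]
    have hPsi : ∀ α₁ α₂, Psi (α₁ ⊗ₜ[K] α₂) = S (α₁ * b) * α₂ := by
      intro α₁ α₂; simp [Psi]
    calc E = ∑ i ∈ ra.index, ∑ j ∈ (Xa i).index,
          Phi i j (∑ k ∈ rb.index, ∑ l ∈ (Xb k).index,
            (Xb k).left l ⊗ₜ[K] ((Xb k).right l * S (rb.right k))) := by
            rw [hE]
            refine Finset.sum_congr rfl fun i _ => Finset.sum_congr rfl fun j _ => ?_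
            rw [map_sum]
            refine Finset.sum_congr rfl fun k _ => ?_
            rw [map_sum]
            refine Finset.sum_congr rfl fun l _ => ?_
            rw [hPhi]
      _ = ∑ i ∈ ra.index, ∑ j ∈ (Xa i).index, Phi i j (b ⊗ₜ[K] 1) := by
            rw [sum_tmul_mul_antipode rb Xb]
      _ = ∑ i ∈ ra.index, ∑ j ∈ (Xa i).index,
            Psi ((Xa i).left j ⊗ₜ[K] ((Xa i).right j * S (ra.right i))) := by
            refine Finset.sum_congr rfl fun i _ => Finset.sum_congr rfl fun j _ => ?_
            rw [hPhi, hPsi]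
            ring
      _ = Psi (a ⊗ₜ[K] 1) := by
            rw [← sum_tmul_mul_antipode ra Xa, map_sum]
            refine Finset.sum_congr rfl fun i _ => ?_
            rw [map_sum]
      _ = S (a * b) := by rw [hPsi, mul_one]
  have wayA : E = S a * S b := by
    rw [hE]
    have step1 : E = ∑ i ∈ ra.index, ∑ k ∈ rb.index,
        (algebraMap K A (ε (ra.left i)) * algebraMap K A (ε (rb.left k))) *
          (S (rb.right k) * S (ra.right i)) := by
      rw [hE]
      refine Finset.sum_congr rfl fun i _ => ?_
      rw [Finset.sum_comm]
      refine Finset.sum_congr rfl fun k _ => ?_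
      have collapse : ∑ j ∈ (Xa i).index, ∑ l ∈ (Xb k).index,
          S ((Xa i).left j * (Xb k).left l) * ((Xa i).right j * (Xb k).right l) =
          algebraMap K A (ε (ra.left i * rb.left k)) := by
        have hrep : ∑ p ∈ (Xa i).index ×ˢ (Xb k).index,
            ((Xa i).left p.1 * (Xb k).left p.2) ⊗ₜ[K]
              ((Xa i).right p.1 * (Xb k).right p.2) = Δ (ra.left i * rb.left k) := by
          rw [Bialgebra.comul_mul, ← (Xa i).eq, ← (Xb k).eq, Finset.sum_mul_sum]
          rw [Finset.sum_product]
          refine Finset.sum_congr rfl fun j _ => Finset.sum_congr rfl fun l _ => ?_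
          rw [Algebra.TensorProduct.tmul_mul_tmul]
        have := sum_antipode_mul_eq_algebraMap_counit (R := K)
          (⟨(Xa i).index ×ˢ (Xb k).index,
            fun p => (Xa i).left p.1 * (Xb k).left p.2,
            fun p => (Xa i).right p.1 * (Xb k).right p.2, hrep⟩ : Repr K (ra.left i * rb.left k) ((A × A) × (A × A)))
        rw [← this, Finset.sum_product]
      calc ∑ j ∈ (Xa i).index, ∑ l ∈ (Xb k).index,
            S ((Xa i).left j * (Xb k).left l) *
              ((Xa i).right j * (((Xb k).right l * S (rb.right k)) * S (ra.right i)))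
          = (∑ j ∈ (Xa i).index, ∑ l ∈ (Xb k).index,
              S ((Xa i).left j * (Xb k).left l) * ((Xa i).right j * (Xb k).right l)) *
              (S (rb.right k) * S (ra.right i)) := by
              rw [Finset.sum_mul]
              refine Finset.sum_congr rfl fun j _ => ?_
              rw [Finset.sum_mul]
              refine Finset.sum_congr rfl fun l _ => ?_
              ring
        _ = algebraMap K A (ε (ra.left i * rb.left k)) * (S (rb.right k) * S (ra.right i)) := by
              rw [collapse]
        _ = (algebraMap K A (ε (ra.left i)) * algebraMap K A (ε (rb.left k))) *
              (S (rb.right k) * S (ra.right i)) := by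
              rw [Bialgebra.counit_mul, map_mul]
    rw [← hE, step1]
    have ha : S a = ∑ i ∈ ra.index, ε (ra.left i) • S (ra.right i) := by
      conv_lhs => rw [← sum_counit_smul_right ra]
      rw [map_sum]
      exact Finset.sum_congr rfl fun i _ => (map_smul _ _ _)
    have hb : S b = ∑ k ∈ rb.index, ε (rb.left k) • S (rb.right k) := by
      conv_lhs => rw [← sum_counit_smul_right rb]
      rw [map_sum]
      exact Finset.sum_congr rfl fun k _ => (map_smul _ _ _)
    rw [ha, hb, Finset.sum_mul]
    refine Finset.sum_congr rfl fun i _ => ?_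
    rw [Finset.mul_sum]
    refine Finset.sum_congr rfl fun k _ => ?_
    rw [Algebra.smul_def, Algebra.smul_def]
    ring
  rw [← wayB, wayA]

end StmtAux

namespace StmtAux
open Coalgebra HopfAlgebra TensorProduct LinearMap
variable {K A : Type*} [CommRing K] [CommRing A] [HopfAlgebra K A]

local notation "S" => HopfAlgebra.antipode (R := K)
local notation "ε" => Coalgebra.counit (R := K)
local notation "Δ" => Coalgebra.comul (R := K)

lemma antipode_antipode (a : A) : S (S a) = a := by
  classical
  set r := ℛ K a with hr
  set X : ∀ i, Repr K (r.left i) (A × A) := fun i => ℛ K (r.left i) with hX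
  set Y : ∀ i, Repr K (r.right i) (A × A) := fun i => ℛ K (r.right i) with hY
  set F : A ⊗[K] (A ⊗[K] A) →ₗ[K] A :=
    (LinearMap.mul' K A).comp
      (TensorProduct.map ((HopfAlgebra.antipode (R := K)).comp (HopfAlgebra.antipode (R := K)))
        ((LinearMap.mul' K A).comp
          (TensorProduct.map (HopfAlgebra.antipode (R := K)) LinearMap.id))) with hF
  have hFt : ∀ x y z : A, F (x ⊗ₜ[K] (y ⊗ₜ[K] z)) = S (S x) * (S y * z) := by
    intro x y z; simp [hF]
  have h := sweedler_apply (K := K) (F := F) r X Y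
  simp only [hFt] at h
  have hL : ∑ i ∈ r.index, ∑ j ∈ (X i).index,
      S (S ((X i).left j)) * (S ((X i).right j) * r.right i) = a := by
    calc ∑ i ∈ r.index, ∑ j ∈ (X i).index,
          S (S ((X i).left j)) * (S ((X i).right j) * r.right i)
        = ∑ i ∈ r.index, (∑ j ∈ (X i).index, S (S ((X i).left j)) * S ((X i).right j)) *
            r.right i := by
          refine Finset.sum_congr rfl fun i _ => ?_
          rw [Finset.sum_mul]
          exact Finset.sum_congr rfl fun j _ => (mul_assoc _ _ _).symm
      _ = ∑ i ∈ r.index, (ε (r.left i) • (1 : A)) * r.right i := by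
          refine Finset.sum_congr rfl fun i _ => ?_
          congr 1
          calc ∑ j ∈ (X i).index, S (S ((X i).left j)) * S ((X i).right j)
              = ∑ j ∈ (X i).index, S (S ((X i).left j) * (X i).right j) := by
                exact Finset.sum_congr rfl fun j _ => (antipode_mul _ _).symm
            _ = S (∑ j ∈ (X i).index, S ((X i).left j) * (X i).right j) := by
                rw [map_sum]
            _ = ε (r.left i) • (1 : A) := by
                rw [sum_antipode_mul_eq_smul (X i), map_smul, antipode_one]
      _ = a := by
          simp only [smul_mul_assoc, one_mul]
          exact sum_counit_smul_right r
  have hR : ∑ i ∈ r.index, ∑ j ∈ (Y i).index,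
      S (S (r.left i)) * (S ((Y i).left j) * (Y i).right j) = S (S a) := by
    calc ∑ i ∈ r.index, ∑ j ∈ (Y i).index,
          S (S (r.left i)) * (S ((Y i).left j) * (Y i).right j)
        = ∑ i ∈ r.index, S (S (r.left i)) * (ε (r.right i) • (1 : A)) := by
          refine Finset.sum_congr rfl fun i _ => ?_
          rw [← Finset.mul_sum, sum_antipode_mul_eq_smul (Y i)]
      _ = ∑ i ∈ r.index, ε (r.right i) • S (S (r.left i)) := by
          refine Finset.sum_congr rfl fun i _ => ?_
          rw [mul_smul_comm, mul_one]
      _ = S (S a) := by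
          have hc : ∀ i ∈ r.index, ε (r.right i) • S (S (r.left i)) =
              S (S (ε (r.right i) • r.left i)) := by
            intro i _; rw [map_smul, map_smul]
          rw [Finset.sum_congr rfl hc, ← map_sum, ← map_sum, sum_counit_smul_left r]
  rw [hL] at h
  rw [hR] at h
  exact h.symm

end StmtAux

namespace StmtAux
open Coalgebra HopfAlgebra TensorProduct LinearMap
variable {K A : Type*} [CommRing K] [CommRing A] [HopfAlgebra K A]

local notation "S" => HopfAlgebra.antipode (R := K)
local notation "ε" => Coalgebra.counit (R := K)
local notation "Δ" => Coalgebra.comul (R := K)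

/-- `τ ∘ (S ⊗ S)` as a linear map `A ⊗ A → A ⊗ A`. -/
noncomputable def tauSS : A ⊗[K] A →ₗ[K] A ⊗[K] A :=
  (TensorProduct.comm K A A).toLinearMap.comp
    (TensorProduct.map (HopfAlgebra.antipode (R := K)) (HopfAlgebra.antipode (R := K)))

@[simp] lemma tauSS_tmul (x y : A) : tauSS (K := K) (x ⊗ₜ[K] y) = S y ⊗ₜ[K] S x := rfl

lemma step2 (c : A) {ι : Type*} {y : A} (ry : Repr K y ι) :
    ∑ j ∈ ry.index, ((S (ry.left j)) ⊗ₜ[K] (S c)) * (Δ (ry.right j)) =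
      (1 : A) ⊗ₜ[K] (S c * y) := by
  classical
  set F : A ⊗[K] (A ⊗[K] A) →ₗ[K] A ⊗[K] A :=
    (TensorProduct.map ((LinearMap.mul' K A).comp (TensorProduct.map
        (HopfAlgebra.antipode (R := K)) LinearMap.id))
      (LinearMap.mulLeft K (S c))).comp
      (TensorProduct.assoc K A A A).symm.toLinearMap with hF
  have hFt : ∀ x u v : A, F (x ⊗ₜ[K] (u ⊗ₜ[K] v)) = (S x * u) ⊗ₜ[K] (S c * v) := by
    intro x u v; simp [hF]
  have h := sweedler_apply (K := K) (F := F) ry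
    (fun j => ℛ K (ry.left j)) (fun j => ℛ K (ry.right j))
  simp only [hFt] at h
  calc ∑ j ∈ ry.index, ((S (ry.left j)) ⊗ₜ[K] (S c)) * (Δ (ry.right j))
      = ∑ j ∈ ry.index, ∑ q ∈ (ℛ K (ry.right j)).index,
          (S (ry.left j) * (ℛ K (ry.right j)).left q) ⊗ₜ[K]
            (S c * (ℛ K (ry.right j)).right q) := by
        refine Finset.sum_congr rfl fun j _ => ?_
        rw [← (ℛ K (ry.right j)).eq, Finset.mul_sum]
        refine Finset.sum_congr rfl fun q _ => ?_
        rw [Algebra.TensorProduct.tmul_mul_tmul]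
    _ = ∑ j ∈ ry.index, ∑ q ∈ (ℛ K (ry.left j)).index,
          (S ((ℛ K (ry.left j)).left q) * (ℛ K (ry.left j)).right q) ⊗ₜ[K]
            (S c * ry.right j) := h.symm
    _ = ∑ j ∈ ry.index, (ε (ry.left j) • (1 : A)) ⊗ₜ[K] (S c * ry.right j) := by
        refine Finset.sum_congr rfl fun j _ => ?_
        rw [← sum_tmul, sum_antipode_mul_eq_smul (ℛ K (ry.left j))]
    _ = (1 : A) ⊗ₜ[K] (S c * y) := by
        have : ∀ j ∈ ry.index, (ε (ry.left j) • (1 : A)) ⊗ₜ[K] (S c * ry.right j) =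
            (1 : A) ⊗ₜ[K] (S c * (ε (ry.left j) • ry.right j)) := by
          intro j _
          rw [smul_tmul, mul_smul_comm]
        rw [Finset.sum_congr rfl this, ← tmul_sum, ← Finset.mul_sum, sum_counit_smul_right ry]

lemma tau_comul_collapse {ι : Type*} {x : A} (r : Repr K x ι) :
    ∑ i ∈ r.index, (tauSS (K := K) (Δ (r.left i))) * (Δ (r.right i)) =
      ε x • (1 : A ⊗[K] A) := by
  classical
  set F : A ⊗[K] (A ⊗[K] A) →ₗ[K] A ⊗[K] A :=
    (LinearMap.mul' K (A ⊗[K] A)).comp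
      ((TensorProduct.map (tauSS (K := K)) Coalgebra.comul).comp
        (TensorProduct.assoc K A A A).symm.toLinearMap) with hF
  have hFt : ∀ a b g : A, F (a ⊗ₜ[K] (b ⊗ₜ[K] g)) = ((S b) ⊗ₜ[K] (S a)) * (Δ g) := by
    intro a b g; simp [hF]
  have h := sweedler_apply (K := K) (F := F) r
    (fun i => ℛ K (r.left i)) (fun i => ℛ K (r.right i))
  simp only [hFt] at h
  calc ∑ i ∈ r.index, (tauSS (K := K) (Δ (r.left i))) * (Δ (r.right i))
      = ∑ i ∈ r.index, ∑ j ∈ (ℛ K (r.left i)).index,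
          ((S ((ℛ K (r.left i)).right j)) ⊗ₜ[K] (S ((ℛ K (r.left i)).left j))) *
            (Δ (r.right i)) := by
        refine Finset.sum_congr rfl fun i _ => ?_
        rw [← (ℛ K (r.left i)).eq, map_sum, Finset.sum_mul]
        refine Finset.sum_congr rfl fun j _ => ?_
        rw [tauSS_tmul]
    _ = ∑ i ∈ r.index, ∑ j ∈ (ℛ K (r.right i)).index,
          ((S ((ℛ K (r.right i)).left j)) ⊗ₜ[K] (S (r.left i))) *
            (Δ ((ℛ K (r.right i)).right j)) := h
    _ = ∑ i ∈ r.index, (1 : A) ⊗ₜ[K] (S (r.left i) * r.right i) := by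
        refine Finset.sum_congr rfl fun i _ => ?_
        exact step2 (r.left i) (ℛ K (r.right i))
    _ = ε x • (1 : A ⊗[K] A) := by
        rw [← tmul_sum, sum_antipode_mul_eq_smul r, tmul_smul,
          Algebra.TensorProduct.one_def]

lemma comul_antipode (a : A) : Δ (S a) = tauSS (K := K) (Δ a) := by
  classical
  set r := ℛ K a with hr
  set F : A ⊗[K] (A ⊗[K] A) →ₗ[K] A ⊗[K] A :=
    (LinearMap.mul' K (A ⊗[K] A)).comp
      (TensorProduct.map ((tauSS (K := K)).comp Coalgebra.comul)
        ((LinearMap.mul' K (A ⊗[K] A)).comp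
          (TensorProduct.map Coalgebra.comul
            (Coalgebra.comul.comp (HopfAlgebra.antipode (R := K)))))) with hF
  have hFt : ∀ x u v : A, F (x ⊗ₜ[K] (u ⊗ₜ[K] v)) =
      (tauSS (K := K) (Δ x)) * ((Δ u) * (Δ (S v))) := by
    intro x u v; simp [hF]
  have h := sweedler_apply (K := K) (F := F) r
    (fun i => ℛ K (r.left i)) (fun i => ℛ K (r.right i))
  simp only [hFt] at h
  have hL : ∑ i ∈ r.index, ∑ j ∈ (ℛ K (r.left i)).index,
      (tauSS (K := K) (Δ ((ℛ K (r.left i)).left j))) *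
        ((Δ ((ℛ K (r.left i)).right j)) * (Δ (S (r.right i)))) = Δ (S a) := by
    calc ∑ i ∈ r.index, ∑ j ∈ (ℛ K (r.left i)).index,
          (tauSS (K := K) (Δ ((ℛ K (r.left i)).left j))) *
            ((Δ ((ℛ K (r.left i)).right j)) * (Δ (S (r.right i))))
        = ∑ i ∈ r.index, (∑ j ∈ (ℛ K (r.left i)).index,
            (tauSS (K := K) (Δ ((ℛ K (r.left i)).left j))) *
              (Δ ((ℛ K (r.left i)).right j))) * (Δ (S (r.right i))) := by
          refine Finset.sum_congr rfl fun i _ => ?_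
          rw [Finset.sum_mul]
          exact Finset.sum_congr rfl fun j _ => (mul_assoc _ _ _).symm
      _ = ∑ i ∈ r.index, (ε (r.left i) • (1 : A ⊗[K] A)) * (Δ (S (r.right i))) := by
          refine Finset.sum_congr rfl fun i _ => ?_
          rw [tau_comul_collapse (ℛ K (r.left i))]
      _ = Δ (S a) := by
          have hc : ∀ i ∈ r.index, (ε (r.left i) • (1 : A ⊗[K] A)) * (Δ (S (r.right i))) =
              Δ (S (ε (r.left i) • r.right i)) := by
            intro i _
            rw [smul_mul_assoc, one_mul, map_smul, map_smul]
          rw [Finset.sum_congr rfl hc, ← map_sum, ← map_sum, sum_counit_smul_right r]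
  have hR : ∑ i ∈ r.index, ∑ j ∈ (ℛ K (r.right i)).index,
      (tauSS (K := K) (Δ (r.left i))) *
        ((Δ ((ℛ K (r.right i)).left j)) * (Δ (S ((ℛ K (r.right i)).right j)))) =
      tauSS (K := K) (Δ a) := by
    calc ∑ i ∈ r.index, ∑ j ∈ (ℛ K (r.right i)).index,
          (tauSS (K := K) (Δ (r.left i))) *
            ((Δ ((ℛ K (r.right i)).left j)) * (Δ (S ((ℛ K (r.right i)).right j))))
        = ∑ i ∈ r.index, (tauSS (K := K) (Δ (r.left i))) * (ε (r.right i) • (1 : A ⊗[K] A)) := by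
          refine Finset.sum_congr rfl fun i _ => ?_
          rw [← Finset.mul_sum]
          congr 1
          calc ∑ j ∈ (ℛ K (r.right i)).index,
                (Δ ((ℛ K (r.right i)).left j)) * (Δ (S ((ℛ K (r.right i)).right j)))
              = ∑ j ∈ (ℛ K (r.right i)).index,
                  Δ ((ℛ K (r.right i)).left j * S ((ℛ K (r.right i)).right j)) := by
                exact Finset.sum_congr rfl fun j _ => (Bialgebra.comul_mul _ _).symm
            _ = Δ (∑ j ∈ (ℛ K (r.right i)).index,
                  (ℛ K (r.right i)).left j * S ((ℛ K (r.right i)).right j)) := by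
                rw [map_sum]
            _ = ε (r.right i) • (1 : A ⊗[K] A) := by
                rw [sum_mul_antipode_eq_smul (ℛ K (r.right i)), map_smul, Bialgebra.comul_one]
      _ = tauSS (K := K) (Δ a) := by
          have hc : ∀ i ∈ r.index,
              (tauSS (K := K) (Δ (r.left i))) * (ε (r.right i) • (1 : A ⊗[K] A)) =
              tauSS (K := K) (Δ (ε (r.right i) • r.left i)) := by
            intro i _
            rw [mul_smul_comm, mul_one, map_smul, map_smul]
          rw [Finset.sum_congr rfl hc, ← map_sum, ← map_sum, sum_counit_smul_left r]
  rw [hL, hR] at h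
  exact h

end StmtAux


namespace StmtAux
open Coalgebra HopfAlgebra TensorProduct LinearMap

variable {K : Type*} [Field K]

section Ctr
variable {M N P Q : Type*} [AddCommGroup M] [Module K M] [AddCommGroup N] [Module K N]
  [AddCommGroup P] [Module K P] [AddCommGroup Q] [Module K Q]

/-- Contract the left factor with a functional. -/
noncomputable def ctrL (φ : M →ₗ[K] K) : M ⊗[K] N →ₗ[K] N :=
  (TensorProduct.lid K N).toLinearMap ∘ₗ rTensor N φ

/-- Contract the right factor with a functional. -/
noncomputable def ctrR (φ : N →ₗ[K] K) : M ⊗[K] N →ₗ[K] M :=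
  (TensorProduct.rid K M).toLinearMap ∘ₗ lTensor M φ

@[simp] lemma ctrL_tmul (φ : M →ₗ[K] K) (m : M) (n : N) :
    ctrL φ (m ⊗ₜ[K] n) = φ m • n := by simp [ctrL]

@[simp] lemma ctrR_tmul (φ : N →ₗ[K] K) (m : M) (n : N) :
    ctrR φ (m ⊗ₜ[K] n) = φ n • m := by simp [ctrR]

lemma ctrL_lTensor (φ : M →ₗ[K] K) (g : P →ₗ[K] Q) :
    (ctrL (N := Q) φ) ∘ₗ lTensor M g = g ∘ₗ ctrL φ :=
  TensorProduct.ext' fun m p => by simp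

lemma ctrR_rTensor (φ : N →ₗ[K] K) (g : P →ₗ[K] Q) :
    (ctrR (M := Q) φ) ∘ₗ rTensor N g = g ∘ₗ ctrR φ :=
  TensorProduct.ext' fun p n => by simp

end Ctr

section Dual
variable {A : Type*} [AddCommGroup A] [Module K A]

lemma exists_dual_family {ι : Type*} [DecidableEq ι] {f : ι → A}
    (hf : LinearIndependent K f) :
    ∃ φ : ι → (A →ₗ[K] K), ∀ i j, φ i (f j) = if j = i then 1 else 0 := by
  obtain ⟨q, hq⟩ := Submodule.exists_isCompl (Submodule.span K (Set.range f))
  let pr := (Submodule.span K (Set.range f)).linearProjOfIsCompl q hq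
  refine ⟨fun i => ((Module.Basis.span hf).coord i) ∘ₗ pr, fun i j => ?_⟩
  have hmem : f j ∈ Submodule.span K (Set.range f) := Submodule.subset_span ⟨j, rfl⟩
  have h1 : pr (f j) = (Module.Basis.span hf) j := by
    have h2 : pr (f j) = ⟨f j, hmem⟩ :=
      Submodule.linearProjOfIsCompl_apply_left hq ⟨f j, hmem⟩
    rw [h2]
    exact (Module.Basis.span_apply hf j).symm
  simp only [LinearMap.comp_apply, h1, Module.Basis.coord_apply, Module.Basis.repr_self,
    Finsupp.single_apply]

lemma coe_basis_sum {W : Submodule K A} [FiniteDimensional K W]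
    (b : Module.Basis (Fin (Module.finrank K W)) K W) (w : W) :
    (w : A) = ∑ i, b.repr w i • ((b i : W) : A) := by
  have h := congrArg W.subtype (b.sum_repr w)
  simp only [map_sum, map_smul, Submodule.coe_subtype] at h
  exact h.symm

lemma exists_rep_right {M : Type*} [AddCommGroup M] [Module K M] (t : M ⊗[K] A) :
    ∃ (n : ℕ) (mm : Fin n → M) (f : Fin n → A), LinearIndependent K f ∧
      t = ∑ i : Fin n, mm i ⊗ₜ[K] f i := by
  classical
  obtain ⟨T, hT⟩ := TensorProduct.exists_finset t
  have hWfin : (Prod.snd '' (T : Set (M × A))).Finite := T.finite_toSet.image _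
  set W := Submodule.span K (Prod.snd '' (T : Set (M × A))) with hW
  haveI : FiniteDimensional K ↥W := FiniteDimensional.span_of_finite K hWfin
  set b := Module.finBasis K W with hb
  have hmem : ∀ p ∈ T, Prod.snd p ∈ W := fun p hp => Submodule.subset_span ⟨p, hp, rfl⟩
  refine ⟨Module.finrank K W,
    fun i => ∑ p ∈ T.attach, (b.repr ⟨(p : M × A).2, hmem _ p.2⟩ i) • (p : M × A).1,
    fun i => ((b i : W) : A),
    b.linearIndependent.map' W.subtype (Submodule.ker_subtype W), ?_⟩
  rw [hT, ← Finset.sum_attach T (fun p => p.1 ⊗ₜ[K] p.2)]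
  calc ∑ p ∈ T.attach, (p : M × A).1 ⊗ₜ[K] (p : M × A).2
      = ∑ p ∈ T.attach, ∑ i, (b.repr ⟨(p : M × A).2, hmem _ p.2⟩ i) •
          ((p : M × A).1 ⊗ₜ[K] ((b i : W) : A)) := by
        refine Finset.sum_congr rfl fun p _ => ?_
        have hcb : (p : M × A).2 = ∑ i, b.repr ⟨(p : M × A).2, hmem _ p.2⟩ i • ((b i : W) : A) :=
          coe_basis_sum b ⟨(p : M × A).2, hmem _ p.2⟩
        conv_lhs => rw [hcb]
        rw [tmul_sum]
        exact Finset.sum_congr rfl fun i _ => (tmul_smul _ _ _)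
    _ = ∑ i, (∑ p ∈ T.attach, (b.repr ⟨(p : M × A).2, hmem _ p.2⟩ i) • (p : M × A).1)
          ⊗ₜ[K] ((b i : W) : A) := by
        rw [Finset.sum_comm]
        refine Finset.sum_congr rfl fun i _ => ?_
        rw [sum_tmul]
        exact Finset.sum_congr rfl fun p _ => smul_tmul' _ _ _

lemma exists_rep_left_family {N : Type*} [AddCommGroup N] [Module K N] (nf : ℕ)
    (Ms : Fin nf → A ⊗[K] N) :
    ∃ (m : ℕ) (e : Fin m → A) (c : Fin m → Fin nf → N), LinearIndependent K e ∧
      ∀ j, Ms j = ∑ i : Fin m, e i ⊗ₜ[K] c i j := by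
  classical
  choose T hT using fun j => TensorProduct.exists_finset (Ms j)
  have hWfin : (⋃ j, Prod.fst '' ((T j : Set (A × N)))).Finite :=
    Set.finite_iUnion fun j => (T j).finite_toSet.image _
  set W := Submodule.span K (⋃ j, Prod.fst '' ((T j : Set (A × N)))) with hW
  haveI : FiniteDimensional K ↥W := FiniteDimensional.span_of_finite K hWfin
  set b := Module.finBasis K W with hb
  have hmem : ∀ (j) (p : A × N), p ∈ T j → p.1 ∈ W := fun j p hp =>
    Submodule.subset_span (Set.mem_iUnion.2 ⟨j, ⟨p, hp, rfl⟩⟩)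
  refine ⟨Module.finrank K W, fun i => ((b i : W) : A),
    fun i j => ∑ p ∈ (T j).attach, (b.repr ⟨(p : A × N).1, hmem j _ p.2⟩ i) • (p : A × N).2,
    b.linearIndependent.map' W.subtype (Submodule.ker_subtype W), fun j => ?_⟩
  rw [hT j, ← Finset.sum_attach (T j) (fun p => p.1 ⊗ₜ[K] p.2)]
  calc ∑ p ∈ (T j).attach, (p : A × N).1 ⊗ₜ[K] (p : A × N).2
      = ∑ p ∈ (T j).attach, ∑ i, (b.repr ⟨(p : A × N).1, hmem j _ p.2⟩ i) •
          (((b i : W) : A) ⊗ₜ[K] (p : A × N).2) := by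
        refine Finset.sum_congr rfl fun p _ => ?_
        have hcb : (p : A × N).1 = ∑ i, b.repr ⟨(p : A × N).1, hmem j _ p.2⟩ i • ((b i : W) : A) :=
          coe_basis_sum b ⟨(p : A × N).1, hmem j _ p.2⟩
        conv_lhs => rw [hcb]
        rw [sum_tmul]
        refine Finset.sum_congr rfl fun i _ => ?_
        rw [smul_tmul']
      _ = ∑ i, ((b i : W) : A) ⊗ₜ[K]
            (∑ p ∈ (T j).attach, (b.repr ⟨(p : A × N).1, hmem j _ p.2⟩ i) • (p : A × N).2) := by
        rw [Finset.sum_comm]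
        refine Finset.sum_congr rfl fun i _ => ?_
        rw [tmul_sum]
        refine Finset.sum_congr rfl fun p _ => ?_
        rw [smul_tmul', smul_tmul]

lemma exists_structured_rep (t : (A ⊗[K] A) ⊗[K] A) :
    ∃ (m n : ℕ) (e : Fin m → A) (f : Fin n → A) (c : Fin m → Fin n → A),
      LinearIndependent K e ∧ LinearIndependent K f ∧
      t = ∑ j : Fin n, ∑ i : Fin m, (e i ⊗ₜ[K] c i j) ⊗ₜ[K] f j := by
  obtain ⟨n, Ms, f, hf, ht⟩ := exists_rep_right t
  obtain ⟨m, e, c, he, hMs⟩ := exists_rep_left_family n Ms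
  refine ⟨m, n, e, f, c, he, hf, ?_⟩
  rw [ht]
  refine Finset.sum_congr rfl fun j _ => ?_
  rw [hMs j, sum_tmul]

end Dual
end StmtAux

namespace StmtAux
open Coalgebra HopfAlgebra TensorProduct LinearMap
section FTC
variable {K : Type*} [Field K] {A : Type*} [AddCommGroup A] [Module K A] [Coalgebra K A]

open Coalgebra

lemma csum_right {ι : Type*} {a : A} (r : Repr K a ι) :
    ∑ i ∈ r.index, counit (R := K) (r.left i) • r.right i = a := by
  have h := congrArg (TensorProduct.lid K A) (sum_counit_tmul_eq r)
  simp only [map_sum, _root_.TensorProduct.lid_tmul, one_smul] at h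
  exact h

lemma csum_left {ι : Type*} {a : A} (r : Repr K a ι) :
    ∑ i ∈ r.index, counit (R := K) (r.right i) • r.left i = a := by
  have h := congrArg (TensorProduct.rid K A) (sum_tmul_counit_eq r)
  simp only [map_sum, _root_.TensorProduct.rid_tmul, one_smul] at h
  exact h

lemma dual_collapseL {M : Type*} [AddCommGroup M] [Module K M] {m : ℕ} {e : Fin m → A}
    (φ : Fin m → (A →ₗ[K] K)) (hφ : ∀ i j, φ i (e j) = if j = i then 1 else 0)
    (g : Fin m → M) (i0 : Fin m) :
    ctrL (φ i0) (∑ i, e i ⊗ₜ[K] g i) = g i0 := by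
  rw [map_sum]
  simp only [ctrL_tmul, hφ, ite_smul, one_smul, zero_smul]
  simp

lemma dual_collapseR {M : Type*} [AddCommGroup M] [Module K M] {m : ℕ} {e : Fin m → A}
    (φ : Fin m → (A →ₗ[K] K)) (hφ : ∀ i j, φ i (e j) = if j = i then 1 else 0)
    (g : Fin m → M) (i0 : Fin m) :
    ctrR (φ i0) (∑ i, g i ⊗ₜ[K] e i) = g i0 := by
  rw [map_sum]
  simp only [ctrR_tmul, hφ, ite_smul, one_smul, zero_smul]
  simp

lemma ctrL_mem_range {P Q : Type*} [AddCommGroup P] [Module K P] [AddCommGroup Q] [Module K Q]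
    (φ : A →ₗ[K] K) (g : P →ₗ[K] Q) {x : A ⊗[K] Q}
    (hx : x ∈ LinearMap.range (LinearMap.lTensor A g)) :
    ctrL φ x ∈ LinearMap.range g := by
  obtain ⟨y, rfl⟩ := hx
  exact ⟨ctrL φ y, by rw [← LinearMap.comp_apply, ← ctrL_lTensor, LinearMap.comp_apply]⟩

lemma ctrR_mem_range {P Q : Type*} [AddCommGroup P] [Module K P] [AddCommGroup Q] [Module K Q]
    (φ : A →ₗ[K] K) (g : P →ₗ[K] Q) {x : Q ⊗[K] A}
    (hx : x ∈ LinearMap.range (LinearMap.rTensor A g)) :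
    ctrR φ x ∈ LinearMap.range g := by
  obtain ⟨y, rfl⟩ := hx
  exact ⟨ctrR φ y, by rw [← LinearMap.comp_apply, ← ctrR_rTensor, LinearMap.comp_apply]⟩

lemma assoc_symm_range (V : Submodule K A) (z : A ⊗[K] (A ⊗[K] A))
    (hz : z ∈ LinearMap.range (LinearMap.rTensor (A ⊗[K] A) V.subtype)) :
    (TensorProduct.assoc K A A A).symm z ∈
      LinearMap.range (LinearMap.rTensor A (LinearMap.rTensor A V.subtype)) := by
  obtain ⟨y, rfl⟩ := hz
  induction y using TensorProduct.induction_on with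
  | zero => simpa using zero_mem _
  | tmul v w =>
    induction w using TensorProduct.induction_on with
    | zero => simpa [tmul_zero] using zero_mem _
    | tmul x y => exact ⟨(v ⊗ₜ[K] x) ⊗ₜ[K] y, by simp⟩
    | add w1 w2 h1 h2 =>
      rw [tmul_add, map_add, map_add]
      exact add_mem h1 h2
  | add y1 y2 h1 h2 =>
    rw [map_add, map_add]
    exact add_mem h1 h2

lemma mem_range_map_of_mem (V : Submodule K A) {x : A ⊗[K] A}
    (h1 : x ∈ LinearMap.range (LinearMap.lTensor A V.subtype))
    (h2 : x ∈ LinearMap.range (LinearMap.rTensor A V.subtype)) :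
    x ∈ LinearMap.range (TensorProduct.map V.subtype V.subtype) := by
  obtain ⟨q, hq⟩ := Submodule.exists_isCompl V
  set p : A →ₗ[K] V := V.linearProjOfIsCompl q hq with hp
  set π : A →ₗ[K] A := V.subtype ∘ₗ p with hπ
  have hπs : π ∘ₗ V.subtype = V.subtype := by
    ext v
    simp [hπ, hp, Submodule.linearProjOfIsCompl_apply_left hq]
    exact Submodule.linearProjOfIsCompl_apply_left hq v
  obtain ⟨y1, hy1⟩ := h1
  obtain ⟨y2, hy2⟩ := h2
  have hl : LinearMap.lTensor A π x = x := by
    rw [← hy1, ← LinearMap.comp_apply, ← LinearMap.lTensor_comp, hπs]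
  have hr : LinearMap.rTensor A π x = x := by
    rw [← hy2, ← LinearMap.comp_apply, ← LinearMap.rTensor_comp, hπs]
  refine ⟨TensorProduct.map p p x, ?_⟩
  calc TensorProduct.map V.subtype V.subtype (TensorProduct.map p p x)
      = TensorProduct.map π π x := by
        rw [← LinearMap.comp_apply, ← TensorProduct.map_comp]
    _ = LinearMap.lTensor A π (LinearMap.rTensor A π x) := by
        rw [← LinearMap.comp_apply, LinearMap.lTensor_comp_rTensor]
    _ = x := by rw [hr, hl]

lemma exists_fg_subcoalgebra (a : A) :
    ∃ V : Submodule K A, V.FG ∧ a ∈ V ∧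
      ∀ v ∈ V, comul (R := K) v ∈ LinearMap.range (LinearMap.lTensor A V.subtype) ∧
        comul (R := K) v ∈ LinearMap.range (LinearMap.rTensor A V.subtype) := by
  classical
  set Δ : A →ₗ[K] A ⊗[K] A := Coalgebra.comul (R := K) with hΔ
  set t3 : (A ⊗[K] A) ⊗[K] A := Δ.rTensor A (Δ a) with ht3def
  obtain ⟨m, n, e, f, c, he, hf, ht3⟩ := exists_structured_rep t3
  obtain ⟨φ, hφ⟩ := exists_dual_family he
  obtain ⟨ψ, hψ⟩ := exists_dual_family hf
  set V := Submodule.span K (Set.range fun p : Fin m × Fin n => c p.1 p.2) with hV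
  have hcV : ∀ i j, c i j ∈ V := fun i j => Submodule.subset_span ⟨(i, j), rfl⟩
  have hFG : V.FG := Submodule.fg_span (Set.finite_range _)
  -- the counit-collapse map
  set ν : A ⊗[K] A →ₗ[K] A := ctrL (Coalgebra.counit (R := K)) with hν
  have hνΔ : ∀ x : A, ν (Δ x) = x := by
    intro x
    rw [hΔ, ← (ℛ K x).eq, map_sum]
    simp only [hν, ctrL_tmul]
    exact csum_right (ℛ K x)
  -- a ∈ V
  have haV : a ∈ V := by
    have h1 : LinearMap.rTensor A ν t3 = Δ a := by
      rw [ht3def, ← LinearMap.comp_apply, ← LinearMap.rTensor_comp]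
      have : ν ∘ₗ Δ = LinearMap.id := LinearMap.ext hνΔ
      rw [this, LinearMap.rTensor_id, LinearMap.id_apply]
    have h2 : ctrR (Coalgebra.counit (R := K)) (LinearMap.rTensor A ν t3) = a := by
      rw [h1, hΔ, ← (ℛ K a).eq, map_sum]
      simp only [ctrR_tmul]
      exact csum_left (ℛ K a)
    rw [ht3, map_sum] at h2
    simp only [map_sum, LinearMap.rTensor_tmul, ctrR_tmul] at h2
    rw [← h2]
    refine sum_mem fun j _ => sum_mem fun i _ => ?_
    refine Submodule.smul_mem _ _ ?_
    have : ν (e i ⊗ₜ[K] c i j) = Coalgebra.counit (R := K) (e i) • c i j := by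
      simp [hν]
    rw [this]
    exact Submodule.smul_mem _ _ (hcV i j)
  -- Claim A : Δ (c i j) ∈ A ⊗ V
  have claimA : ∀ i0 j0, Δ (c i0 j0) ∈
      LinearMap.range (LinearMap.lTensor A V.subtype) := by
    intro i0 j0
    have hbig : LinearMap.rTensor A (Δ.lTensor A) t3 =
        LinearMap.rTensor A (TensorProduct.assoc K A A A).toLinearMap
          (LinearMap.rTensor A (Δ.rTensor A) t3) := by
      calc LinearMap.rTensor A (Δ.lTensor A) t3
          = LinearMap.rTensor A ((Δ.lTensor A) ∘ₗ Δ) (Δ a) := by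
            rw [ht3def, LinearMap.rTensor_comp, LinearMap.comp_apply]
        _ = LinearMap.rTensor A ((TensorProduct.assoc K A A A).toLinearMap ∘ₗ
              (Δ.rTensor A) ∘ₗ Δ) (Δ a) := by
            exact congrArg (fun g => LinearMap.rTensor A g (Δ a))
              (Coalgebra.coassoc (R := K)).symm
        _ = LinearMap.rTensor A (TensorProduct.assoc K A A A).toLinearMap
              (LinearMap.rTensor A (Δ.rTensor A) t3) := by
            rw [LinearMap.rTensor_comp, LinearMap.comp_apply, LinearMap.rTensor_comp,
              LinearMap.comp_apply, ht3def]
    have hLrw : LinearMap.rTensor A (Δ.lTensor A) t3 =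
        ∑ j, (∑ i, e i ⊗ₜ[K] Δ (c i j)) ⊗ₜ[K] f j := by
      rw [ht3]
      simp only [map_sum, LinearMap.rTensor_tmul, LinearMap.lTensor_tmul]
      exact Finset.sum_congr rfl fun j _ => by rw [← sum_tmul]
    have hRrw : LinearMap.rTensor A (TensorProduct.assoc K A A A).toLinearMap
        (LinearMap.rTensor A (Δ.rTensor A) t3) =
        ∑ j, (∑ i, (TensorProduct.assoc K A A A) (Δ (e i) ⊗ₜ[K] c i j)) ⊗ₜ[K] f j := by
      rw [ht3]
      simp only [map_sum, LinearMap.rTensor_tmul, LinearEquiv.coe_coe]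
      exact Finset.sum_congr rfl fun j _ => by rw [← sum_tmul]
    rw [hLrw, hRrw] at hbig
    have hkey := congrArg (ctrR (ψ j0)) hbig
    rw [dual_collapseR ψ hψ _ j0, dual_collapseR ψ hψ _ j0] at hkey
    have hmem : (∑ i, (TensorProduct.assoc K A A A) (Δ (e i) ⊗ₜ[K] c i j0)) ∈
        LinearMap.range (LinearMap.lTensor A (LinearMap.lTensor A V.subtype)) := by
      refine sum_mem fun i _ => ?_
      obtain ⟨T, hT⟩ := TensorProduct.exists_finset (Δ (e i))
      rw [hT, sum_tmul, map_sum]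
      refine sum_mem fun q _ => ?_
      exact ⟨q.1 ⊗ₜ[K] (q.2 ⊗ₜ[K] (⟨c i j0, hcV i j0⟩ : V)), by simp⟩
    rw [← hkey] at hmem
    have := ctrL_mem_range (φ i0) (LinearMap.lTensor A V.subtype) hmem
    rwa [dual_collapseL φ hφ _ i0] at this
  -- Claim B : Δ (c i j) ∈ V ⊗ A
  have claimB : ∀ i0 j0, Δ (c i0 j0) ∈
      LinearMap.range (LinearMap.rTensor A V.subtype) := by
    intro i0 j0
    have ht3' : (TensorProduct.assoc K A A A) t3 = Δ.lTensor A (Δ a) := by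
      rw [ht3def, hΔ]
      exact Coalgebra.coassoc_apply a
    have hbig : LinearMap.lTensor A (Δ.lTensor A) ((TensorProduct.assoc K A A A) t3) =
        LinearMap.lTensor A (TensorProduct.assoc K A A A).toLinearMap
          (LinearMap.lTensor A (Δ.rTensor A) ((TensorProduct.assoc K A A A) t3)) := by
      calc LinearMap.lTensor A (Δ.lTensor A) ((TensorProduct.assoc K A A A) t3)
          = LinearMap.lTensor A ((Δ.lTensor A) ∘ₗ Δ) (Δ a) := by
            rw [ht3', LinearMap.lTensor_comp, LinearMap.comp_apply]
        _ = LinearMap.lTensor A ((TensorProduct.assoc K A A A).toLinearMap ∘ₗ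
              (Δ.rTensor A) ∘ₗ Δ) (Δ a) := by
            exact congrArg (fun g => LinearMap.lTensor A g (Δ a))
              (Coalgebra.coassoc (R := K)).symm
        _ = LinearMap.lTensor A (TensorProduct.assoc K A A A).toLinearMap
              (LinearMap.lTensor A (Δ.rTensor A) ((TensorProduct.assoc K A A A) t3)) := by
            rw [LinearMap.lTensor_comp, LinearMap.comp_apply, LinearMap.lTensor_comp,
              LinearMap.comp_apply, ht3']
    have hrep' : (TensorProduct.assoc K A A A) t3 =
        ∑ i, e i ⊗ₜ[K] (∑ j, c i j ⊗ₜ[K] f j) := by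
      rw [ht3, map_sum]
      simp only [map_sum, _root_.TensorProduct.assoc_tmul]
      rw [Finset.sum_comm]
      exact Finset.sum_congr rfl fun i _ => by rw [← tmul_sum]
    have hLrw : LinearMap.lTensor A (Δ.lTensor A) ((TensorProduct.assoc K A A A) t3) =
        ∑ i, e i ⊗ₜ[K] (∑ j, c i j ⊗ₜ[K] Δ (f j)) := by
      rw [hrep']
      simp only [map_sum, LinearMap.lTensor_tmul, tmul_sum]
    have hRrw : LinearMap.lTensor A (TensorProduct.assoc K A A A).toLinearMap
        (LinearMap.lTensor A (Δ.rTensor A) ((TensorProduct.assoc K A A A) t3)) =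
        ∑ i, e i ⊗ₜ[K] ((TensorProduct.assoc K A A A) (∑ j, Δ (c i j) ⊗ₜ[K] f j)) := by
      rw [hrep']
      simp only [map_sum, LinearMap.lTensor_tmul, tmul_sum, LinearMap.rTensor_tmul,
        LinearEquiv.coe_coe]
    rw [hLrw, hRrw] at hbig
    have hkey := congrArg (ctrL (φ i0)) hbig
    rw [dual_collapseL φ hφ _ i0, dual_collapseL φ hφ _ i0] at hkey
    -- hkey : ∑ j, c i0 j ⊗ Δ (f j) = assoc (∑ j, Δ (c i0 j) ⊗ f j)
    have hmem : (∑ j, c i0 j ⊗ₜ[K] Δ (f j)) ∈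
        LinearMap.range (LinearMap.rTensor (A ⊗[K] A) V.subtype) := by
      refine sum_mem fun j _ => ?_
      exact ⟨(⟨c i0 j, hcV i0 j⟩ : V) ⊗ₜ[K] Δ (f j), by simp⟩
    rw [hkey] at hmem
    have heq : (∑ j, Δ (c i0 j) ⊗ₜ[K] f j) =
        (TensorProduct.assoc K A A A).symm
          ((TensorProduct.assoc K A A A) (∑ j, Δ (c i0 j) ⊗ₜ[K] f j)) := by
      rw [LinearEquiv.symm_apply_apply]
    have hmem2 := assoc_symm_range V _ hmem
    rw [← heq] at hmem2
    have := ctrR_mem_range (ψ j0) (LinearMap.rTensor A V.subtype) hmem2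
    rwa [dual_collapseR ψ hψ _ j0] at this
  refine ⟨V, hFG, haV, ?_⟩
  have hsub : V ≤ Submodule.comap Δ
      (LinearMap.range (LinearMap.lTensor A V.subtype) ⊓
        LinearMap.range (LinearMap.rTensor A V.subtype)) := by
    rw [hV, Submodule.span_le]
    rintro x ⟨p, rfl⟩
    exact ⟨claimA p.1 p.2, claimB p.1 p.2⟩
  intro v hv
  exact hsub hv

end FTC
end StmtAux

namespace StmtAux
open Coalgebra HopfAlgebra TensorProduct LinearMap

variable {K A : Type*} [Field K] [CommRing A] [HopfAlgebra K A]

local notation "S" => HopfAlgebra.antipode (R := K)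
local notation "Δc" => Coalgebra.comul (R := K)

lemma range_lTensor_mono {V W : Submodule K A} (h : V ≤ W) :
    LinearMap.range (LinearMap.lTensor A V.subtype) ≤
      LinearMap.range (LinearMap.lTensor A W.subtype) := by
  rintro x ⟨y, rfl⟩
  refine ⟨LinearMap.lTensor A (Submodule.inclusion h) y, ?_⟩
  rw [← LinearMap.comp_apply, ← LinearMap.lTensor_comp]
  rfl

lemma range_rTensor_mono {V W : Submodule K A} (h : V ≤ W) :
    LinearMap.range (LinearMap.rTensor A V.subtype) ≤
      LinearMap.range (LinearMap.rTensor A W.subtype) := by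
  rintro x ⟨y, rfl⟩
  refine ⟨LinearMap.rTensor A (Submodule.inclusion h) y, ?_⟩
  rw [← LinearMap.comp_apply, ← LinearMap.rTensor_comp]
  rfl

lemma range_map_mono {V W : Submodule K A} (h : V ≤ W) :
    LinearMap.range (TensorProduct.map V.subtype V.subtype) ≤
      LinearMap.range (TensorProduct.map W.subtype W.subtype) := by
  rintro x ⟨y, rfl⟩
  refine ⟨TensorProduct.map (Submodule.inclusion h) (Submodule.inclusion h) y, ?_⟩
  rw [← LinearMap.comp_apply, ← TensorProduct.map_comp]
  rfl

lemma tauSS_map_mem {V W : Submodule K A} (hVW : V ≤ W)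
    (hSW : ∀ v ∈ V, S v ∈ W) (y : V ⊗[K] V) :
    tauSS (K := K) (TensorProduct.map V.subtype V.subtype y) ∈
      LinearMap.range (TensorProduct.map W.subtype W.subtype) := by
  let g : V →ₗ[K] W :=
    LinearMap.codRestrict W ((HopfAlgebra.antipode (R := K)) ∘ₗ V.subtype)
      (fun v => hSW v v.2)
  refine ⟨(TensorProduct.comm K W W) (TensorProduct.map g g y), ?_⟩
  have key : (TensorProduct.map W.subtype W.subtype) ∘ₗ
      (TensorProduct.comm K W W).toLinearMap ∘ₗ TensorProduct.map g g =
      (tauSS (K := K)) ∘ₗ TensorProduct.map V.subtype V.subtype := by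
    apply TensorProduct.ext'
    intro v v'
    simp [g, tauSS]
    rfl
  calc (TensorProduct.map W.subtype W.subtype)
        ((TensorProduct.comm K W W) (TensorProduct.map g g y))
      = ((TensorProduct.map W.subtype W.subtype) ∘ₗ
          (TensorProduct.comm K W W).toLinearMap ∘ₗ TensorProduct.map g g) y := rfl
    _ = tauSS (K := K) (TensorProduct.map V.subtype V.subtype y) := by rw [key]; rfl

end StmtAux

/-- Every finite subset of a commutative Hopf algebra `A` over a field `K` is contained in
a Hopf subalgebra of `A` that is finitely generated as a `K`-algebra (a subalgebra `B`
with `Δ(B) ⊆ B ⊗ B` and `S(B) ⊆ B`). -/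
theorem stmt_14 {K A : Type*} [Field K] [CommRing A] [HopfAlgebra K A]
    (s : Finset A) :
    ∃ B : Subalgebra K A, B.FG ∧ (↑s : Set A) ⊆ B ∧
      (∀ b ∈ B, Coalgebra.comul (R := K) b ∈
        LinearMap.range (TensorProduct.map B.val.toLinearMap B.val.toLinearMap)) ∧
      (∀ b ∈ B, HopfAlgebra.antipode (R := K) b ∈ B) := by
  classical
  choose Vf hVfg hVmem hVco using (StmtAux.exists_fg_subcoalgebra (K := K) (A := A))
  set V : Submodule K A := s.sup Vf with hV
  have hVFG : V.FG := Submodule.fg_finset_sup s Vf (fun a _ => hVfg a)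
  have hsV : ∀ a ∈ s, a ∈ V := by
    intro a ha
    have hle : Vf a ≤ V := Finset.le_sup ha
    exact hle (hVmem a)
  have hVco' : ∀ v ∈ V,
      Coalgebra.comul (R := K) v ∈ LinearMap.range (LinearMap.lTensor A V.subtype) ∧
      Coalgebra.comul (R := K) v ∈ LinearMap.range (LinearMap.rTensor A V.subtype) := by
    intro v hv
    have hle : V ≤ Submodule.comap (Coalgebra.comul (R := K))
        (LinearMap.range (LinearMap.lTensor A V.subtype) ⊓
          LinearMap.range (LinearMap.rTensor A V.subtype)) := by
      refine Finset.sup_le fun a ha => ?_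
      intro w hw
      obtain ⟨h1, h2⟩ := hVco a w hw
      exact ⟨StmtAux.range_lTensor_mono (Finset.le_sup ha) h1,
        StmtAux.range_rTensor_mono (Finset.le_sup ha) h2⟩
    exact hle hv
  have hVmap : ∀ v ∈ V, Coalgebra.comul (R := K) v ∈
      LinearMap.range (TensorProduct.map V.subtype V.subtype) :=
    fun v hv => StmtAux.mem_range_map_of_mem V (hVco' v hv).1 (hVco' v hv).2
  set W : Submodule K A := V ⊔ Submodule.map (HopfAlgebra.antipode (R := K)) V with hW
  have hWFG : W.FG := hVFG.sup (hVFG.map _)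
  have hVW : V ≤ W := le_sup_left
  have hSVW : ∀ v ∈ V, HopfAlgebra.antipode (R := K) v ∈ W := by
    intro v hv
    have hle : Submodule.map (HopfAlgebra.antipode (R := K)) V ≤ W := le_sup_right
    exact hle (Submodule.mem_map_of_mem hv)
  have hWmap : ∀ w ∈ W, Coalgebra.comul (R := K) w ∈
      LinearMap.range (TensorProduct.map W.subtype W.subtype) := by
    intro w hw
    obtain ⟨v, hv, z, hz, rfl⟩ := Submodule.mem_sup.1 hw
    rw [map_add]
    refine add_mem (StmtAux.range_map_mono hVW (hVmap v hv)) ?_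
    obtain ⟨v₀, hv₀, rfl⟩ := hz
    obtain ⟨y, hy⟩ := hVmap v₀ hv₀
    rw [StmtAux.comul_antipode, ← hy]
    exact StmtAux.tauSS_map_mem hVW hSVW y
  have hWS : ∀ w ∈ W, HopfAlgebra.antipode (R := K) w ∈ W := by
    intro w hw
    obtain ⟨v, hv, z, hz, rfl⟩ := Submodule.mem_sup.1 hw
    rw [map_add]
    refine add_mem (hSVW v hv) ?_
    obtain ⟨v₀, hv₀, rfl⟩ := hz
    rw [StmtAux.antipode_antipode]
    exact hVW hv₀
  set B : Subalgebra K A := Algebra.adjoin K (W : Set A) with hB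
  have hWB : ∀ x ∈ W, x ∈ B := fun x hx => Algebra.subset_adjoin hx
  have hBFG : B.FG := by
    obtain ⟨t, ht⟩ := hWFG
    refine ⟨t, ?_⟩
    rw [hB, ← ht, Algebra.adjoin_span]
  -- the subalgebra of "good" elements
  set Salg : A →ₐ[K] A := AlgHom.ofLinearMap (HopfAlgebra.antipode (R := K))
    StmtAux.antipode_one StmtAux.antipode_mul with hSalg
  set AlgR : Subalgebra K (A ⊗[K] A) := (Algebra.TensorProduct.map B.val B.val).range
    with hAlgR
  set B₂ : Subalgebra K A :=
    (Subalgebra.comap (Bialgebra.comulAlgHom K A) AlgR) ⊓ (Subalgebra.comap Salg B)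
    with hB₂
  have hWB₂ : (W : Set A) ⊆ (B₂ : Set A) := by
    intro w hw
    refine Algebra.mem_inf.2 ⟨?_, ?_⟩
    · rw [Subalgebra.mem_comap]
      obtain ⟨y, hy⟩ := hWmap w hw
      have hj : ∀ x : W, (x : A) ∈ B := fun x => hWB x x.2
      let j : W →ₗ[K] B := LinearMap.codRestrict (Subalgebra.toSubmodule B)
        W.subtype (fun x => hj x)
      refine ⟨TensorProduct.map j j y, ?_⟩
      have key : (Algebra.TensorProduct.map B.val B.val).toLinearMap ∘ₗ
          TensorProduct.map j j = TensorProduct.map W.subtype W.subtype := by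
        apply TensorProduct.ext'
        intro x x'
        rfl
      calc (Algebra.TensorProduct.map B.val B.val) (TensorProduct.map j j y)
          = ((Algebra.TensorProduct.map B.val B.val).toLinearMap ∘ₗ
              TensorProduct.map j j) y := rfl
        _ = TensorProduct.map W.subtype W.subtype y := by rw [key]
        _ = Bialgebra.comulAlgHom K A w := by
            rw [hy]; rfl
    · rw [Subalgebra.mem_comap]
      exact hWB _ (hWS w hw)
  have hBB₂ : B ≤ B₂ := Algebra.adjoin_le hWB₂
  refine ⟨B, hBFG, fun a ha => hWB a (hVW (hsV a ha)), ?_, ?_⟩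
  · intro b hb
    have h2 := (Algebra.mem_inf.1 (hBB₂ hb)).1
    rw [Subalgebra.mem_comap] at h2
    obtain ⟨z, hz⟩ := h2
    refine ⟨z, ?_⟩
    have h3 : (TensorProduct.map B.val.toLinearMap B.val.toLinearMap)
        = (Algebra.TensorProduct.map B.val B.val).toLinearMap := by
      apply TensorProduct.ext'
      intro x y
      simp
    rw [h3]
    exact hz
  · intro b hb
    have h2 := (Algebra.mem_inf.1 (hBB₂ hb)).2
    rw [Subalgebra.mem_comap] at h2
    exact h2
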